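/- Let L > 0, η > 0, β ≥ 0 and let h ≥ 1 be an integer with η ≤ 1/(3Lh). Suppose s_1, …, s_h are nonnegative reals satisfying, for every τ ∈ {1, …, h}, the drift recursion s_τ ≤ 6L²τη²·Σ_{m=1}^{τ} s_m + τ²η²β. Then the total client-model divergence is bounded as Σ_{τ=1}^{h} s_τ ≤ (η²β/2)·h(h+1)(2h+1); in particular Σ_{τ=1}^{h} s_τ ≤ 3h³η²β. -/
import Mathlib

lemma sum_sq_Icc (n : ℕ) :
    (∑ τ ∈ Finset.Icc 1 n, (τ : ℝ) ^ 2)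
      = (n : ℝ) * ((n : ℝ) + 1) * (2 * (n : ℝ) + 1) / 6 := by
  induction n with
  | zero => simp
  | succ k ih =>
    rw [Finset.sum_Icc_succ_top (by omega : 1 ≤ k + 1), ih]
    push_cast
    ring

/-- **Client-model divergence recursion.**
Let `L > 0`, `η > 0`, `β ≥ 0` and `h ≥ 1` with `η ≤ 1/(3Lh)`. If nonnegative
reals `s_1, …, s_h` satisfy the drift recursion
`s_τ ≤ 6L²τη²·Σ_{m=1}^τ s_m + τ²η²β` for every `τ ∈ {1,…,h}`, then
`Σ_{τ=1}^h s_τ ≤ (η²β/2)·h(h+1)(2h+1)`, and in particular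
`Σ_{τ=1}^h s_τ ≤ 3h³η²β`. -/
theorem stmt_11 (L η β : ℝ) (hL : 0 < L) (hη : 0 < η) (hβ : 0 ≤ β)
    (h : ℕ) (hh : 1 ≤ h) (hηL : η ≤ 1 / (3 * L * h))
    (s : ℕ → ℝ)
    (hs_nonneg : ∀ τ ∈ Finset.Icc 1 h, 0 ≤ s τ)
    (hrec : ∀ τ ∈ Finset.Icc 1 h,
      s τ ≤ 6 * L ^ 2 * (τ : ℝ) * η ^ 2 * (∑ m ∈ Finset.Icc 1 τ, s m)
        + (τ : ℝ) ^ 2 * η ^ 2 * β) :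
    (∑ τ ∈ Finset.Icc 1 h, s τ)
        ≤ η ^ 2 * β / 2 * ((h : ℝ) * ((h : ℝ) + 1) * (2 * (h : ℝ) + 1)) ∧
      (∑ τ ∈ Finset.Icc 1 h, s τ) ≤ 3 * (h : ℝ) ^ 3 * η ^ 2 * β := by
  set S := ∑ τ ∈ Finset.Icc 1 h, s τ with hS
  have hSnn : 0 ≤ S := Finset.sum_nonneg hs_nonneg
  have h1 : (1 : ℝ) ≤ (h : ℝ) := by exact_mod_cast hh
  have hhpos : (0 : ℝ) < (h : ℝ) := by linarith
  have hηh : η * (3 * L * (h : ℝ)) ≤ 1 := by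
    have hpos : (0 : ℝ) < 3 * L * (h : ℝ) := by positivity
    rw [← le_div_iff₀ hpos]
    exact hηL
  have hc : 6 * L ^ 2 * (h : ℝ) ^ 2 * η ^ 2 ≤ 2 / 3 := by
    nlinarith [mul_pos hη (by positivity : (0:ℝ) < 3 * L * (h:ℝ))]
  -- sum the recursion
  have key : S ≤ 6 * L ^ 2 * (h : ℝ) ^ 2 * η ^ 2 * S
      + η ^ 2 * β * ((h : ℝ) * ((h : ℝ) + 1) * (2 * (h : ℝ) + 1) / 6) := by
    have step : S ≤ ∑ τ ∈ Finset.Icc 1 h,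
        (6 * L ^ 2 * (h : ℝ) * η ^ 2 * S + (τ : ℝ) ^ 2 * η ^ 2 * β) := by
      apply Finset.sum_le_sum
      intro τ hτ
      have hmem := Finset.mem_Icc.mp hτ
      have hτh : (τ : ℝ) ≤ (h : ℝ) := by exact_mod_cast hmem.2
      have hτnn : (0 : ℝ) ≤ (τ : ℝ) := by positivity
      have hsub : (∑ m ∈ Finset.Icc 1 τ, s m) ≤ S := by
        apply Finset.sum_le_sum_of_subset_of_nonneg
        · exact Finset.Icc_subset_Icc_right hmem.2
        · intro i hi _; exact hs_nonneg i hi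
      have hsubnn : (0 : ℝ) ≤ ∑ m ∈ Finset.Icc 1 τ, s m :=
        Finset.sum_nonneg fun i hi => hs_nonneg i (Finset.mem_Icc.mp hi |>.1
          |> fun h1 => Finset.mem_Icc.mpr ⟨h1, le_trans (Finset.mem_Icc.mp hi).2 hmem.2⟩)
      refine (hrec τ hτ).trans ?_
      have : 6 * L ^ 2 * (τ : ℝ) * η ^ 2 * (∑ m ∈ Finset.Icc 1 τ, s m)
          ≤ 6 * L ^ 2 * (h : ℝ) * η ^ 2 * S := by
        apply mul_le_mul _ hsub hsubnn (by positivity)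
        have : (6 : ℝ) * L ^ 2 * τ ≤ 6 * L ^ 2 * h := by nlinarith
        nlinarith [sq_nonneg η]
      linarith
    have hsum : ∑ τ ∈ Finset.Icc 1 h,
        (6 * L ^ 2 * (h : ℝ) * η ^ 2 * S + (τ : ℝ) ^ 2 * η ^ 2 * β)
        = 6 * L ^ 2 * (h : ℝ) ^ 2 * η ^ 2 * S
          + η ^ 2 * β * ((h : ℝ) * ((h : ℝ) + 1) * (2 * (h : ℝ) + 1) / 6) := by
      rw [Finset.sum_add_distrib, Finset.sum_const, Nat.card_Icc]
      have : ∑ τ ∈ Finset.Icc 1 h, (τ : ℝ) ^ 2 * η ^ 2 * β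
          = (∑ τ ∈ Finset.Icc 1 h, (τ : ℝ) ^ 2) * (η ^ 2 * β) := by
        rw [Finset.sum_mul]; apply Finset.sum_congr rfl; intros; ring
      rw [this, sum_sq_Icc]
      simp only [Nat.add_sub_cancel, nsmul_eq_mul]
      ring
    rw [hsum] at step
    exact step
  have hQnn : 0 ≤ η ^ 2 * β * ((h : ℝ) * ((h : ℝ) + 1) * (2 * (h : ℝ) + 1) / 6) := by
    positivity
  have hcs : 6 * L ^ 2 * (h : ℝ) ^ 2 * η ^ 2 * S ≤ 2 / 3 * S :=
    mul_le_mul_of_nonneg_right hc hSnn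
  have hmain : S ≤ η ^ 2 * β / 2 * ((h : ℝ) * ((h : ℝ) + 1) * (2 * (h : ℝ) + 1)) := by
    nlinarith
  refine ⟨hmain, hmain.trans ?_⟩
  nlinarith [mul_nonneg (mul_nonneg (mul_nonneg (sq_nonneg η) hβ) hhpos.le)
    (mul_nonneg (sub_nonneg.mpr h1) (by positivity : (0:ℝ) ≤ 4 * (h:ℝ) + 1))]
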